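/- Let σ = σ_β be the softplus activation σ_β(x) = (1/β)·log(e^{βx} + 1) with β > 0. Then for all x ∈ ℝ: (a) σ'(x)² > σ(x)·σ''(x), i.e., σ is strictly log-concave; (b) the function x ↦ σ(x)/σ'(x) is strictly increasing and convex on ℝ; (c) the function x ↦ x·σ'(x)/σ(x) is strictly increasing on ℝ; and (d) σ'''(x)·σ'(x) ≤ σ''(x)², i.e., σ' is log-concave. -/

import Mathlib

open Real

/-- The softplus activation `σ_β(x) = (1/β) log(e^{βx} + 1)`. -/
noncomputable def softplus (β x : ℝ) : ℝ := (1 / β) * Real.log (Real.exp (β * x) + 1)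

lemma sp_hd (β : ℝ) (hβ : 0 < β) (x : ℝ) :
    HasDerivAt (softplus β) (Real.exp (β*x) / (Real.exp (β*x) + 1)) x := by
  have h1 : HasDerivAt (fun x : ℝ => β * x) β x := by
    simpa using (hasDerivAt_id x).const_mul β
  have h2 : HasDerivAt (fun x : ℝ => Real.exp (β*x)) (Real.exp (β*x) * β) x := h1.exp
  have h3 : HasDerivAt (fun x : ℝ => Real.exp (β*x) + 1) (Real.exp (β*x) * β) x :=
    h2.add_const 1
  have h4 := (h3.log (by positivity)).const_mul (1/β)
  refine h4.congr_deriv ?_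
  field_simp

lemma sp_d1 (β : ℝ) (hβ : 0 < β) :
    deriv (softplus β) = fun x => Real.exp (β*x) / (Real.exp (β*x) + 1) :=
  funext fun x => (sp_hd β hβ x).deriv

lemma sp_hd2 (β : ℝ) (x : ℝ) :
    HasDerivAt (fun x => Real.exp (β*x) / (Real.exp (β*x) + 1))
      (β * Real.exp (β*x) / (Real.exp (β*x) + 1)^2) x := by
  have h1 : HasDerivAt (fun x : ℝ => β * x) β x := by
    simpa using (hasDerivAt_id x).const_mul β
  have h2 : HasDerivAt (fun x : ℝ => Real.exp (β*x)) (Real.exp (β*x) * β) x := h1.exp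
  have h3 : HasDerivAt (fun x : ℝ => Real.exp (β*x) + 1) (Real.exp (β*x) * β) x :=
    h2.add_const 1
  have h4 := h2.fun_div h3 (by positivity)
  refine h4.congr_deriv ?_
  have hu : Real.exp (β*x) + 1 ≠ 0 := by positivity
  field_simp
  ring

lemma sp_d2 (β : ℝ) (hβ : 0 < β) :
    deriv (deriv (softplus β)) = fun x => β * Real.exp (β*x) / (Real.exp (β*x) + 1)^2 := by
  rw [sp_d1 β hβ]
  exact funext fun x => (sp_hd2 β x).deriv

lemma sp_hd3 (β : ℝ) (x : ℝ) :
    HasDerivAt (fun x => β * Real.exp (β*x) / (Real.exp (β*x) + 1)^2)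
      (β^2 * Real.exp (β*x) * (1 - Real.exp (β*x)) / (Real.exp (β*x) + 1)^3) x := by
  have h1 : HasDerivAt (fun x : ℝ => β * x) β x := by
    simpa using (hasDerivAt_id x).const_mul β
  have h2 : HasDerivAt (fun x : ℝ => Real.exp (β*x)) (Real.exp (β*x) * β) x := h1.exp
  have h3 : HasDerivAt (fun x : ℝ => Real.exp (β*x) + 1) (Real.exp (β*x) * β) x :=
    h2.add_const 1
  have hn : HasDerivAt (fun x : ℝ => β * Real.exp (β*x)) (β * (Real.exp (β*x) * β)) x :=
    h2.const_mul β
  have hden : HasDerivAt (fun x : ℝ => (Real.exp (β*x) + 1)^2)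
      (2 * (Real.exp (β*x) + 1) * (Real.exp (β*x) * β)) x := by
    simpa [mul_comm, mul_assoc, mul_left_comm] using (h3.fun_pow 2)
  have h4 := hn.fun_div hden (by positivity)
  refine h4.congr_deriv ?_
  have hu : Real.exp (β*x) + 1 ≠ 0 := by positivity
  field_simp
  ring

lemma sp_d3 (β : ℝ) (hβ : 0 < β) (x : ℝ) :
    deriv (deriv (deriv (softplus β))) x
      = β^2 * Real.exp (β*x) * (1 - Real.exp (β*x)) / (Real.exp (β*x) + 1)^3 := by
  rw [sp_d2 β hβ]
  exact (sp_hd3 β x).deriv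

lemma log_lt (t : ℝ) (ht : 0 < t) : Real.log (t+1) < t := by
  have := Real.log_lt_sub_one_of_pos (x := t+1) (by linarith) (by linarith)
  linarith

lemma log_ge (t : ℝ) (ht : 0 < t) : t / (t+1) ≤ Real.log (t+1) := by
  have h := Real.log_le_sub_one_of_pos (x := 1/(t+1)) (by positivity)
  rw [Real.log_div one_ne_zero (by positivity), Real.log_one] at h
  have : 1 / (t+1) - 1 = -(t/(t+1)) := by field_simp; ring
  linarith

lemma log_pos' (t : ℝ) (ht : 0 < t) : 0 < Real.log (t+1) :=
  Real.log_pos (by linarith)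

lemma bracket_pos (t : ℝ) (ht : 0 < t) :
    0 < (t+1) * Real.log (t+1) + Real.log t * (Real.log (t+1) - t) := by
  have h1 := log_lt t ht
  have h2 := log_pos' t ht
  rcases le_or_gt (Real.log t) 0 with h | h
  · nlinarith
  · have h3 : Real.log t < Real.log (t+1) := Real.log_lt_log (by positivity) (by linarith)
    nlinarith

/-- Properties of softplus: (a) strict log-concavity `σ'² > σσ''`;
(b) `σ/σ'` is strictly increasing and convex; (c) `x·σ'/σ` is strictly increasing;
(d) `σ'` is log-concave, i.e. `σ'''σ' ≤ σ''²`. -/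
theorem softplus_properties (β : ℝ) (hβ : 0 < β) :
    (∀ x : ℝ, softplus β x * deriv (deriv (softplus β)) x < deriv (softplus β) x ^ 2) ∧
    (StrictMono (fun x : ℝ => softplus β x / deriv (softplus β) x) ∧
      ConvexOn ℝ Set.univ (fun x : ℝ => softplus β x / deriv (softplus β) x)) ∧
    StrictMono (fun x : ℝ => x * deriv (softplus β) x / softplus β x) ∧
    (∀ x : ℝ, deriv (deriv (deriv (softplus β))) x * deriv (softplus β) x ≤
      deriv (deriv (softplus β)) x ^ 2) := by
  have hβ' : β ≠ 0 := ne_of_gt hβ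
  -- notation
  have key_a : ∀ x : ℝ, softplus β x * deriv (deriv (softplus β)) x < deriv (softplus β) x ^ 2 := by
    intro x
    rw [sp_d2 β hβ, sp_d1 β hβ]
    simp only
    set t := Real.exp (β*x) with hts
    have ht : 0 < t := Real.exp_pos _
    have hu : (0:ℝ) < t + 1 := by linarith
    have hlog := log_lt t ht
    have hlp := log_pos' t ht
    unfold softplus
    rw [← hts, div_pow,
      show 1/β * Real.log (t+1) * (β * t / (t+1)^2) = t * Real.log (t+1) / (t+1)^2 from by
        field_simp,
      div_lt_div_iff₀ (by positivity) (by positivity)]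
    nlinarith [mul_pos ht (pow_pos hu 2)]
  -- derivative of f = σ/σ'
  have hdf : ∀ x : ℝ, HasDerivAt (fun x : ℝ => softplus β x / deriv (softplus β) x)
      (1 - Real.log (Real.exp (β*x) + 1) / Real.exp (β*x)) x := by
    intro x
    have ht : 0 < Real.exp (β*x) := Real.exp_pos _
    have hu : (0:ℝ) < Real.exp (β*x) + 1 := by linarith
    rw [sp_d1 β hβ]
    have h := (sp_hd β hβ x).fun_div (sp_hd2 β x) (by positivity)
    refine h.congr_deriv ?_
    unfold softplus
    rw [div_pow]
    field_simp
  have hmono1 : StrictMono (fun x : ℝ => softplus β x / deriv (softplus β) x) := by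
    apply strictMono_of_deriv_pos
    intro x
    rw [(hdf x).deriv]
    have ht : 0 < Real.exp (β*x) := Real.exp_pos _
    have hlog := log_lt (Real.exp (β*x)) ht
    have : Real.log (Real.exp (β*x) + 1) / Real.exp (β*x) < 1 := by
      rw [div_lt_one ht]; exact hlog
    linarith
  -- derivative of φ = 1 - log u / t
  have hdφ : ∀ x : ℝ, HasDerivAt
      (fun x : ℝ => 1 - Real.log (Real.exp (β*x) + 1) / Real.exp (β*x))
      (β * (Real.log (Real.exp (β*x) + 1) - Real.exp (β*x) / (Real.exp (β*x) + 1))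
        / Real.exp (β*x)) x := by
    intro x
    have h1 : HasDerivAt (fun x : ℝ => β * x) β x := by
      simpa using (hasDerivAt_id x).const_mul β
    have h2 : HasDerivAt (fun x : ℝ => Real.exp (β*x)) (Real.exp (β*x) * β) x := h1.exp
    have h3 : HasDerivAt (fun x : ℝ => Real.exp (β*x) + 1) (Real.exp (β*x) * β) x :=
      h2.add_const 1
    have ht : 0 < Real.exp (β*x) := Real.exp_pos _
    have hu : (0:ℝ) < Real.exp (β*x) + 1 := by linarith
    have hl : HasDerivAt (fun x : ℝ => Real.log (Real.exp (β*x) + 1))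
        (Real.exp (β*x) * β / (Real.exp (β*x) + 1)) x := h3.log (by positivity)
    have hq := (hl.fun_div h2 (ne_of_gt ht)).const_sub 1
    refine hq.congr_deriv ?_
    field_simp
    ring
  have hderivf : deriv (fun x : ℝ => softplus β x / deriv (softplus β) x)
      = fun x : ℝ => 1 - Real.log (Real.exp (β*x) + 1) / Real.exp (β*x) :=
    funext fun x => (hdf x).deriv
  have hconv : ConvexOn ℝ Set.univ (fun x : ℝ => softplus β x / deriv (softplus β) x) := by
    apply convexOn_of_deriv2_nonneg' convex_univ
    · intro x _
      exact (hdf x).differentiableAt.differentiableWithinAt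
    · intro x _
      rw [hderivf]
      exact (hdφ x).differentiableAt.differentiableWithinAt
    · intro x _
      have : deriv^[2] (fun x : ℝ => softplus β x / deriv (softplus β) x) x
          = deriv (deriv (fun x : ℝ => softplus β x / deriv (softplus β) x)) x := rfl
      rw [this, hderivf, (hdφ x).deriv]
      have ht : 0 < Real.exp (β*x) := Real.exp_pos _
      have hge := log_ge (Real.exp (β*x)) ht
      apply div_nonneg _ (le_of_lt ht)
      apply mul_nonneg (le_of_lt hβ)
      linarith
  -- part c
  have sp_pos : ∀ x : ℝ, 0 < softplus β x := by
    intro x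
    have := log_pos' (Real.exp (β*x)) (Real.exp_pos _)
    unfold softplus
    positivity
  have hmono2 : StrictMono (fun x : ℝ => x * deriv (softplus β) x / softplus β x) := by
    apply strictMono_of_deriv_pos
    intro x
    set t := Real.exp (β*x) with hts
    have ht : 0 < t := Real.exp_pos _
    have hu : (0:ℝ) < t + 1 := by linarith
    have hnum : HasDerivAt (fun x : ℝ => x * deriv (softplus β) x)
        (1 * (t/(t+1)) + x * (β * t / (t+1)^2)) x := by
      rw [sp_d1 β hβ]
      exact (hasDerivAt_id x).mul (sp_hd2 β x)
    have h := hnum.fun_div (sp_hd β hβ x) (ne_of_gt (sp_pos x))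
    rw [h.deriv]
    apply div_pos _ (pow_pos (sp_pos x) 2)
    have hd1x : deriv (softplus β) x = Real.exp (β*x) / (Real.exp (β*x) + 1) :=
      (sp_hd β hβ x).deriv
    rw [hd1x, ← hts]
    have hb := bracket_pos t ht
    rw [show Real.log t = β * x from by rw [hts]; exact Real.log_exp _] at hb
    have heq : (1 * (t/(t+1)) + x * (β * t / (t+1)^2)) * softplus β x - x * (t/(t+1)) * (t/(t+1))
        = (t / (β * (t+1)^2)) * ((t+1) * Real.log (t+1) + (β*x) * (Real.log (t+1) - t)) := by
      unfold softplus
      rw [← hts]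
      field_simp
      ring
    rw [heq]
    positivity
  -- part d
  have key_d : ∀ x : ℝ, deriv (deriv (deriv (softplus β))) x * deriv (softplus β) x ≤
      deriv (deriv (softplus β)) x ^ 2 := by
    intro x
    rw [sp_d3 β hβ x, sp_d2 β hβ, sp_d1 β hβ]
    simp only
    set t := Real.exp (β*x) with hts
    have ht : 0 < t := Real.exp_pos _
    have hu : (0:ℝ) < t + 1 := by linarith
    rw [div_mul_div_comm, div_pow, mul_pow, div_le_div_iff₀ (by positivity) (by positivity)]
    nlinarith [mul_pos (mul_pos (mul_pos (mul_pos hβ hβ) ht) (mul_pos ht ht)) (pow_pos hu 4)]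
  exact ⟨key_a, ⟨hmono1, hconv⟩, hmono2, key_d⟩
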